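/- Let d ≥ 1 and let F : (Fin d → ℝ) → ℝ be supermodular on the nonnegative cone, i.e. for all indices i ≠ j, all reals h, k > 0, and every y with all coordinates nonnegative: F(y + h·e_i + k·e_j) + F(y) ≥ F(y + h·e_i) + F(y + k·e_j). Define G(y) = F(y) − Σ_{i=1}^{d} F(y_i·e_i). Then G is nondecreasing in each variable on the nonnegative cone: if y and y' have all coordinates nonnegative and y_i ≤ y'_i for every i, then G(y) ≤ G(y'). -/
import Mathlib


/-- A function `G : ℝ^m → ℝ` is supermodular on the nonnegative cone if for all distinct
coordinates `i ≠ j`, all increments `h, k > 0` and every `y` with nonnegative coordinates,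
`G(y + h·e_i + k·e_j) + G(y) ≥ G(y + h·e_i) + G(y + k·e_j)`. -/
def SupermodularOnNonnegCone {m : ℕ} (G : (Fin m → ℝ) → ℝ) : Prop :=
  ∀ i j : Fin m, i ≠ j → ∀ h k : ℝ, 0 < h → 0 < k →
    ∀ y : Fin m → ℝ, (∀ s, 0 ≤ y s) →
      G (y + Pi.single i h) + G (y + Pi.single j k) ≤
        G (y + Pi.single i h + Pi.single j k) + G y

private lemma helperA {d : ℕ} (F : (Fin d → ℝ) → ℝ) (hF : SupermodularOnNonnegCone F)
    (i : Fin d) (h : ℝ) (hh : 0 ≤ h) (y : Fin d → ℝ) (hy : ∀ s, 0 ≤ y s) :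
    F y + F (Pi.single i (y i + h)) ≤ F (y + Pi.single i h) + F (Pi.single i (y i)) := by
  rcases eq_or_lt_of_le hh with rfl | hh
  · simp
  · -- induction on the set of coordinates (other than i) already present
    have key : ∀ S : Finset (Fin d), i ∉ S →
        F ((fun j => if j ∈ S then y j else 0) + Pi.single i (y i))
          + F (Pi.single i (y i + h)) ≤
        F ((fun j => if j ∈ S then y j else 0) + Pi.single i (y i) + Pi.single i h)
          + F (Pi.single i (y i)) := by
      intro S
      induction S using Finset.induction_on with
      | empty =>
        intro _
        have : (fun j : Fin d => if j ∈ (∅ : Finset (Fin d)) then y j else 0) = 0 := by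
          funext j; simp
        rw [this, zero_add, ← Pi.single_add]
        linarith
      | @insert j S hjS ih =>
        intro hiS
        have hji : j ≠ i := by rintro rfl; exact hiS (Finset.mem_insert_self j S)
        have hiS' : i ∉ S := fun hmem => hiS (Finset.mem_insert_of_mem hmem)
        have hmask : (fun t : Fin d => if t ∈ insert j S then y t else 0)
            = (fun t : Fin d => if t ∈ S then y t else 0) + Pi.single j (y j) := by
          funext t
          by_cases htj : t = j
          · subst htj
            simp [hjS, Pi.single_eq_same]
          · simp [Finset.mem_insert, htj, Pi.single_eq_of_ne htj]
        set z : Fin d → ℝ := (fun t : Fin d => if t ∈ S then y t else 0) + Pi.single i (y i)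
          with hz
        have hznn : ∀ s, 0 ≤ z s := by
          intro s
          have h1 : (0:ℝ) ≤ (if s ∈ S then y s else 0) := by split <;> simp [hy s]
          have h2 : 0 ≤ (Pi.single i (y i) : Fin d → ℝ) s := by
            rcases eq_or_ne s i with h' | h'
            · rw [h']; simp [hy i]
            · simp [Pi.single_eq_of_ne h']
          exact add_nonneg h1 h2
        rcases eq_or_lt_of_le (hy j) with hyj | hyj
        · have : (fun t : Fin d => if t ∈ insert j S then y t else 0)
              = (fun t : Fin d => if t ∈ S then y t else 0) := by
            rw [hmask, ← hyj]; simp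
          rw [this]; exact ih hiS'
        · have hsup := hF i j (Ne.symm hji) h (y j) hh hyj z hznn
          have ih' := ih hiS'
          have e1 : (fun t : Fin d => if t ∈ insert j S then y t else 0) + Pi.single i (y i)
              = z + Pi.single j (y j) := by
            rw [hmask, hz]; abel
          rw [e1, show z + Pi.single j (y j) + Pi.single i h
              = z + Pi.single i h + Pi.single j (y j) from by abel]
          linarith
    have hk := key (Finset.univ.erase i) (Finset.notMem_erase i _)
    have emask : (fun j : Fin d => if j ∈ Finset.univ.erase i then y j else 0)
        + Pi.single i (y i) = y := by
      funext t
      by_cases hti : t = i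
      · subst hti; simp
      · simp [Finset.mem_erase, hti, Pi.single_eq_of_ne hti]
    rw [emask] at hk
    exact hk

theorem stmt6 (d : ℕ) (hd : 1 ≤ d) (F : (Fin d → ℝ) → ℝ)
    (hF : SupermodularOnNonnegCone F) :
    ∀ y y' : Fin d → ℝ, (∀ i, 0 ≤ y i) → (∀ i, 0 ≤ y' i) → (∀ i, y i ≤ y' i) →
      F y - ∑ i, F (Pi.single i (y i)) ≤ F y' - ∑ i, F (Pi.single i (y' i)) := by
  intro y y' hy hy' hle
  have key : ∀ S : Finset (Fin d),
      F y - ∑ i, F (Pi.single i (y i)) ≤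
        F (fun j => if j ∈ S then y' j else y j)
          - ∑ i, F (Pi.single i ((fun j => if j ∈ S then y' j else y j) i)) := by
    intro S
    induction S using Finset.induction_on with
    | empty => simp
    | @insert i S hiS ih =>
      set w : Fin d → ℝ := (fun j => if j ∈ S then y' j else y j) with hwdef
      have hwnn : ∀ s, 0 ≤ w s := by
        intro s
        simp only [hwdef]
        split
        · exact hy' s
        · exact hy s
      have hwi : w i = y i := by simp [hwdef, hiS]
      set δ : ℝ := y' i - y i with hδ
      have hδ0 : 0 ≤ δ := by have := hle i; simp [hδ]; linarith
      have hstep := helperA F hF i δ hδ0 w hwnn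
      have e : w i + δ = y' i := by rw [hwi, hδ]; ring
      rw [e, hwi] at hstep
      have hw' : (fun j => if j ∈ insert i S then y' j else y j)
          = w + Pi.single i δ := by
        funext t
        by_cases hti : t = i
        · rw [hti, if_pos (Finset.mem_insert_self i S)]
          simp only [Pi.add_apply, Pi.single_eq_same]
          exact e.symm
        · simp [hwdef, Finset.mem_insert, hti, Pi.single_eq_of_ne hti]
      rw [hw']
      have hcoord : ∀ t : Fin d, t ≠ i → ((w + Pi.single i δ : Fin d → ℝ)) t = w t := by
        intro t ht
        simp [Pi.single_eq_of_ne ht]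
      have hicoord : ((w + Pi.single i δ : Fin d → ℝ)) i = y' i := by
        simp [hwi, hδ]
      have hdiff : ∑ j, (F (Pi.single j (((w + Pi.single i δ : Fin d → ℝ)) j))
            - F (Pi.single j (w j)))
          = F (Pi.single i (y' i)) - F (Pi.single i (y i)) := by
        rw [Finset.sum_eq_single i]
        · rw [hicoord, hwi]
        · intro b _ hb
          rw [hcoord b hb]; ring
        · simp
      rw [Finset.sum_sub_distrib] at hdiff
      linarith
  have hfin := key Finset.univ
  have : (fun j : Fin d => if j ∈ (Finset.univ : Finset (Fin d)) then y' j else y j) = y' := by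
    funext t; simp
  rw [this] at hfin
  exact hfin
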